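/- Suppose y = Ax + e where x ∈ ℝ^N is s-sparse. Let T be an index set with |T| = t, let x' ∈ ℝ^N satisfy y = Ax' exactly, and let μ' be the feedback of x', i.e., μ'_T = x'_T + (A_Tᵀ A_T)^{-1} A_Tᵀ A_{T^c} x'_{T^c} and μ'_{T^c} = 0. If δ_{s+t} < 1, then ‖x - μ'‖₂ ≤ √(1+δ_t)‖e‖₂/(1-δ_{s+t}) + ‖x_{T^c}‖₂/√(1-δ_{s+t}²). -/

import Mathlib

open Matrix Finset Real MeasureTheory ProbabilityTheory
open scoped BigOperators

noncomputable section

/-- squared Euclidean norm -/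
def nsq {n : ℕ} (v : Fin n → ℝ) : ℝ := ∑ i, v i ^ 2

/-- Euclidean norm -/
def nrm {n : ℕ} (v : Fin n → ℝ) : ℝ := Real.sqrt (∑ i, v i ^ 2)

open Classical in
/-- support of a vector, as a finset -/
def suppF {n : ℕ} (x : Fin n → ℝ) : Finset (Fin n) :=
  Finset.univ.filter (fun i => x i ≠ 0)

/-- `x` is `s`-sparse -/
def Sparse {n : ℕ} (s : ℕ) (x : Fin n → ℝ) : Prop := (suppF x).card ≤ s

/-- `δ` is a restricted isometry constant of order `t` for `A`:
`(1-δ)‖x‖² ≤ ‖Ax‖² ≤ (1+δ)‖x‖²` for all `t`-sparse `x`. -/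
def IsRIP {M N : ℕ} (A : Matrix (Fin M) (Fin N) ℝ) (t : ℕ) (δ : ℝ) : Prop :=
  ∀ x : Fin N → ℝ, Sparse t x →
    (1 - δ) * nsq x ≤ nsq (A.mulVec x) ∧ nsq (A.mulVec x) ≤ (1 + δ) * nsq x

/-- restriction of a vector to an index set (zeroing entries outside it) -/
def restr {n : ℕ} (T : Finset (Fin n)) (x : Fin n → ℝ) : Fin n → ℝ :=
  fun i => if i ∈ T then x i else 0

/-- submatrix of the columns of `A` indexed by `T` -/
def colSub {M N : ℕ} (A : Matrix (Fin M) (Fin N) ℝ) (T : Finset (Fin N)) :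
    Matrix (Fin M) T ℝ :=
  fun i j => A i j.val

/-- the feedback step: `μ'_T = x_T + (A_Tᵀ A_T)⁻¹ A_Tᵀ A_{Tᶜ} x_{Tᶜ}`, `μ'_{Tᶜ} = 0`. -/
def feedback {M N : ℕ} (A : Matrix (Fin M) (Fin N) ℝ) (T : Finset (Fin N))
    (x : Fin N → ℝ) : Fin N → ℝ :=
  fun i => if h : i ∈ T then
    x i + ((((colSub A T)ᵀ * colSub A T)⁻¹ * (colSub A T)ᵀ).mulVec
      (A.mulVec (restr Tᶜ x))) ⟨i, h⟩
  else 0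

/-- `hatAbs x k` is the `k`-th largest absolute entry of `x` (1-based index). -/
def hatAbs {n : ℕ} (x : Fin n → ℝ) (k : ℕ) : ℝ :=
  if h : k - 1 < n then |x (Tuple.sort (fun i => -|x i|) ⟨k - 1, h⟩)| else 0

/-- `T` contains the indices of the `p` largest absolute entries of `x`. -/
def containsTop {n : ℕ} (x : Fin n → ℝ) (p : ℕ) (T : Finset (Fin n)) : Prop :=
  ∀ j : Fin n, (j : ℕ) < p → Tuple.sort (fun i => -|x i|) j ∈ T

/-- The NST+HT+FB algorithm: `T k` is the set of the `s` largest absolute entries of the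
feasible iterate `x^k`, `μ^k` is the thresholding-plus-feedback of `x^k` on `T k`, and
`x^{k+1} = μ^k + Aᵀ(AAᵀ)⁻¹(y - Aμ^k)` is the null space tuning step. -/
def NSTSpec {M N : ℕ} (A : Matrix (Fin M) (Fin N) ℝ) (y : Fin M → ℝ) (s : ℕ)
    (T : ℕ → Finset (Fin N)) (xs μ : ℕ → Fin N → ℝ) : Prop :=
  (∀ k, A.mulVec (xs k) = y) ∧
  (∀ k, (T k).card = s) ∧
  (∀ k, ∀ i ∈ T k, ∀ j ∉ T k, |xs k j| ≤ |xs k i|) ∧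
  (∀ k, μ k = feedback A (T k) (xs k)) ∧
  (∀ k, xs (k + 1) = μ k + (Aᵀ * (A * Aᵀ)⁻¹).mulVec (y - A.mulVec (μ k)))

/-- The adaptive AdptNST+HT+FB algorithm: identical to NST+HT+FB except that at step `k`
the index set `T k` consists of the `k` largest absolute entries of `x^k`. -/
def AdptSpec {M N : ℕ} (A : Matrix (Fin M) (Fin N) ℝ) (y : Fin M → ℝ)
    (T : ℕ → Finset (Fin N)) (xs μ : ℕ → Fin N → ℝ) : Prop :=
  (∀ k, A.mulVec (xs k) = y) ∧
  (∀ k, (T k).card = k) ∧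
  (∀ k, ∀ i ∈ T k, ∀ j ∉ T k, |xs k j| ≤ |xs k i|) ∧
  (∀ k, μ k = feedback A (T k) (xs k)) ∧
  (∀ k, xs (k + 1) = μ k + (Aᵀ * (A * Aᵀ)⁻¹).mulVec (y - A.mulVec (μ k)))

lemma nsq_nonneg {n : ℕ} (v : Fin n → ℝ) : 0 ≤ nsq v :=
  Finset.sum_nonneg fun i _ => sq_nonneg _

lemma nrm_eq {n : ℕ} (v : Fin n → ℝ) : nrm v = Real.sqrt (nsq v) := rfl

lemma nrm_nonneg {n : ℕ} (v : Fin n → ℝ) : 0 ≤ nrm v := Real.sqrt_nonneg _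

lemma nrm_sq {n : ℕ} (v : Fin n → ℝ) : nrm v ^ 2 = nsq v :=
  Real.sq_sqrt (nsq_nonneg v)

lemma dot_self_eq_nsq {n : ℕ} (v : Fin n → ℝ) : v ⬝ᵥ v = nsq v := by
  simp [dotProduct, nsq, sq]

lemma dp_sq_le {n : ℕ} (u v : Fin n → ℝ) : (u ⬝ᵥ v) ^ 2 ≤ nsq u * nsq v := by
  simpa [dotProduct, nsq] using Finset.sum_mul_sq_le_sq_mul_sq Finset.univ u v

lemma dp_le_nrm {n : ℕ} (u v : Fin n → ℝ) : u ⬝ᵥ v ≤ nrm u * nrm v := by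
  have h := dp_sq_le u v
  have h2 : u ⬝ᵥ v ≤ Real.sqrt ((u ⬝ᵥ v) ^ 2) := by
    rw [Real.sqrt_sq_eq_abs]; exact le_abs_self _
  calc u ⬝ᵥ v ≤ Real.sqrt ((u ⬝ᵥ v) ^ 2) := h2
    _ ≤ Real.sqrt (nsq u * nsq v) := Real.sqrt_le_sqrt h
    _ = nrm u * nrm v := by rw [Real.sqrt_mul (nsq_nonneg u), nrm_eq, nrm_eq]

lemma nsq_add {n : ℕ} (u v : Fin n → ℝ) :
    nsq (u + v) = nsq u + 2 * (u ⬝ᵥ v) + nsq v := by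
  simp only [nsq, dotProduct, Pi.add_apply, Finset.mul_sum, ← Finset.sum_add_distrib]
  exact Finset.sum_congr rfl fun i _ => by ring

lemma nrm_add_le {n : ℕ} (u v : Fin n → ℝ) : nrm (u + v) ≤ nrm u + nrm v := by
  rw [nrm_eq]
  have h : nsq (u + v) ≤ (nrm u + nrm v) ^ 2 := by
    rw [nsq_add]
    have := dp_le_nrm u v
    have h1 := nrm_sq u; have h2 := nrm_sq v
    nlinarith
  calc Real.sqrt (nsq (u+v)) ≤ Real.sqrt ((nrm u + nrm v)^2) := Real.sqrt_le_sqrt h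
    _ = nrm u + nrm v := Real.sqrt_sq (add_nonneg (nrm_nonneg u) (nrm_nonneg v))

lemma nrm_sub_le {n : ℕ} (u v : Fin n → ℝ) : nrm (u - v) ≤ nrm u + nrm v := by
  have h : nrm (-v) = nrm v := by simp [nrm]
  calc nrm (u - v) = nrm (u + (-v)) := by rw [sub_eq_add_neg]
    _ ≤ nrm u + nrm (-v) := nrm_add_le u (-v)
    _ = nrm u + nrm v := by rw [h]

lemma nsq_add_smul {n : ℕ} (p q : Fin n → ℝ) (α : ℝ) :
    nsq (p + α • q) = nsq p + 2*α*(p ⬝ᵥ q) + α^2 * nsq q := by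
  simp only [nsq, dotProduct, Pi.add_apply, Pi.smul_apply, smul_eq_mul,
    Finset.mul_sum, ← Finset.sum_add_distrib]
  exact Finset.sum_congr rfl fun i _ => by ring



lemma sparse_of_subset {n k : ℕ} {w : Fin n → ℝ} {S : Finset (Fin n)}
    (h : ∀ i, w i ≠ 0 → i ∈ S) (hc : S.card ≤ k) : Sparse k w := by
  refine le_trans (Finset.card_le_card ?_) hc
  intro i hi
  classical
  exact h i (by simpa [suppF] using hi)

section AT
variable {M N : ℕ} (A : Matrix (Fin M) (Fin N) ℝ) (T : Finset (Fin N))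

/-- restriction of a vector to a `T`-indexed vector -/
def rT (w : Fin N → ℝ) : {j : Fin N // j ∈ T} → ℝ := fun j => w j.val

/-- extension of a `T`-indexed vector to a full vector -/
def extT (v : {j : Fin N // j ∈ T} → ℝ) : Fin N → ℝ :=
  fun i => if h : i ∈ T then v ⟨i, h⟩ else 0

lemma restr_add_compl (w : Fin N → ℝ) : restr T w + restr Tᶜ w = w := by
  funext i
  by_cases h : i ∈ T <;> simp [restr, h]

lemma mulVec_restr (w : Fin N → ℝ) :
    A.mulVec (restr T w) = (colSub A T).mulVec (rT T w) := by
  funext i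
  simp only [Matrix.mulVec, dotProduct, restr, colSub, rT, mul_ite, mul_zero]
  rw [Finset.sum_ite_mem, Finset.univ_inter]
  rw [← Finset.sum_attach T (fun j => A i j * w j)]
  simp [Finset.univ_eq_attach]

lemma mulVec_extT (v : {j : Fin N // j ∈ T} → ℝ) :
    (colSub A T).mulVec v = A.mulVec (extT T v) := by
  have h1 : restr T (extT T v) = extT T v := by
    funext i; by_cases h : i ∈ T <;> simp [restr, extT, h]
  have h2 : rT T (extT T v) = v := by
    funext j; simp [rT, extT, j.2]
  rw [← h1, mulVec_restr, h2]

lemma extT_apply_mem (v : {j : Fin N // j ∈ T} → ℝ) (j : {j : Fin N // j ∈ T}) :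
    extT T v j.val = v j := by simp [extT, j.2]

lemma nsq_extT (v : {j : Fin N // j ∈ T} → ℝ) : nsq (extT T v) = v ⬝ᵥ v := by
  classical
  have h0 : ∀ i ∈ Finset.univ, i ∉ T → (extT T v i)^2 = 0 := by
    intro i _ hi; simp [extT, hi]
  have h1 : nsq (extT T v) = ∑ i ∈ T, (extT T v i)^2 :=
    (Finset.sum_subset (Finset.subset_univ T) h0).symm
  rw [h1, ← Finset.sum_attach T (fun i => (extT T v i)^2)]
  simp only [dotProduct, Finset.univ_eq_attach]
  exact Finset.sum_congr rfl fun j _ => by rw [extT_apply_mem]; ring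

end AT

section Feedback
variable {M N : ℕ} (A : Matrix (Fin M) (Fin N) ℝ) (T : Finset (Fin N))


/-- solution of the normal equations `A_Tᵀ A_T ξ = A_Tᵀ c`, extended by zero -/
def dsol (c : Fin M → ℝ) : Fin N → ℝ :=
  fun i => if h : i ∈ T then
    (((((colSub A T)ᵀ * colSub A T))⁻¹ * (colSub A T)ᵀ).mulVec c) ⟨i, h⟩
  else 0

lemma restr_eq_self_of_supp {w : Fin N → ℝ} (hw : ∀ i ∉ T, w i = 0) :
    restr T w = w := by
  funext i; by_cases h : i ∈ T <;> simp [restr, h, hw]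

lemma G_posdef
    (hlow : ∀ v : {j : Fin N // j ∈ T} → ℝ, v ≠ 0 → 0 < nsq (A.mulVec (extT T v))) :
    ((colSub A T)ᵀ * colSub A T).PosDef := by
  rw [Matrix.posDef_iff_dotProduct_mulVec]
  constructor
  · simpa using Matrix.isHermitian_conjTranspose_mul_self (colSub A T)
  · intro v hv
    have h1 : star v = v := by simp
    rw [h1, ← Matrix.mulVec_mulVec, Matrix.dotProduct_mulVec, Matrix.vecMul_transpose,
      mulVec_extT, dot_self_eq_nsq]
    exact hlow v hv

lemma rT_dsol (c : Fin M → ℝ) :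
    rT T (dsol A T c) = ((((colSub A T)ᵀ * colSub A T)⁻¹ * (colSub A T)ᵀ).mulVec c) := by
  funext j
  simp [rT, dsol, j.2]

lemma dsol_supp (c : Fin M → ℝ) : ∀ i ∉ T, dsol A T c i = 0 := by
  intro i hi; simp [dsol, hi]

lemma G_mulVec_dsol (hG : ((colSub A T)ᵀ * colSub A T) * ((colSub A T)ᵀ * colSub A T)⁻¹ = 1)
    (c : Fin M → ℝ) :
    ((colSub A T)ᵀ * colSub A T) *ᵥ (rT T (dsol A T c)) = (colSub A T)ᵀ *ᵥ c := by
  rw [rT_dsol, Matrix.mulVec_mulVec, ← Matrix.mul_assoc, hG, Matrix.one_mul]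

lemma G_mulVec_feedback
    (hG : ((colSub A T)ᵀ * colSub A T) * ((colSub A T)ᵀ * colSub A T)⁻¹ = 1)
    (x' : Fin N → ℝ) :
    ((colSub A T)ᵀ * colSub A T) *ᵥ (rT T (feedback A T x')) =
      (colSub A T)ᵀ *ᵥ (A *ᵥ x') := by
  have h1 : rT T (feedback A T x') = rT T x' +
      ((((colSub A T)ᵀ * colSub A T)⁻¹ * (colSub A T)ᵀ).mulVec (A.mulVec (restr Tᶜ x'))) := by
    funext j
    simp [rT, feedback, j.2]
  rw [h1, Matrix.mulVec_add, Matrix.mulVec_mulVec, ← Matrix.mul_assoc, hG, Matrix.one_mul]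
  have h2 : ((colSub A T)ᵀ * colSub A T) *ᵥ rT T x' = (colSub A T)ᵀ *ᵥ (A *ᵥ restr T x') := by
    rw [mulVec_restr, Matrix.mulVec_mulVec]
  rw [h2, ← Matrix.mulVec_add, ← Matrix.mulVec_add, restr_add_compl]

lemma feedback_supp (x' : Fin N → ℝ) : ∀ i ∉ T, feedback A T x' i = 0 := by
  intro i hi; simp [feedback, hi]

/-- the feedback splits as the sum of the normal-equation solutions for `A x` and `e` -/
lemma feedback_split
    (hG : ((colSub A T)ᵀ * colSub A T) * ((colSub A T)ᵀ * colSub A T)⁻¹ = 1)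
    (hG' : ((colSub A T)ᵀ * colSub A T)⁻¹ * ((colSub A T)ᵀ * colSub A T) = 1)
    (x x' : Fin N → ℝ) (e : Fin M → ℝ) (hfe : A *ᵥ x' = A *ᵥ x + e) :
    feedback A T x' = dsol A T (A *ᵥ x) + dsol A T e := by
  have key : ((colSub A T)ᵀ * colSub A T) *ᵥ (rT T (feedback A T x')) =
      ((colSub A T)ᵀ * colSub A T) *ᵥ (rT T (dsol A T (A *ᵥ x)) + rT T (dsol A T e)) := by
    rw [G_mulVec_feedback A T hG, Matrix.mulVec_add, G_mulVec_dsol A T hG,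
      G_mulVec_dsol A T hG, hfe, Matrix.mulVec_add]
  have key2 : rT T (feedback A T x') = rT T (dsol A T (A *ᵥ x)) + rT T (dsol A T e) := by
    have := congrArg (fun z => ((colSub A T)ᵀ * colSub A T)⁻¹ *ᵥ z) key
    simpa [Matrix.mulVec_mulVec, hG', Matrix.one_mulVec] using this
  funext i
  by_cases h : i ∈ T
  · have := congrFun key2 ⟨i, h⟩
    simpa [rT] using this
  · simp [feedback_supp A T x' i h, dsol_supp A T _ i h, Pi.add_apply]

/-- orthogonality of the residual against the range of `A_T` -/
lemma orth (ν : Fin N → ℝ) (hν : ∀ i ∉ T, ν i = 0) (c : Fin M → ℝ)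
    (hkey : ((colSub A T)ᵀ * colSub A T) *ᵥ (rT T ν) = (colSub A T)ᵀ *ᵥ c)
    (w : Fin N → ℝ) (hw : ∀ i ∉ T, w i = 0) :
    (A *ᵥ w) ⬝ᵥ (c - A *ᵥ ν) = 0 := by
  have hAw : A *ᵥ w = (colSub A T) *ᵥ (rT T w) := by
    rw [← mulVec_restr, restr_eq_self_of_supp T hw]
  have hAν : A *ᵥ ν = (colSub A T) *ᵥ (rT T ν) := by
    rw [← mulVec_restr, restr_eq_self_of_supp T hν]
  have step : ∀ q : Fin M → ℝ, ((colSub A T) *ᵥ (rT T w)) ⬝ᵥ q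
      = (rT T w) ⬝ᵥ ((colSub A T)ᵀ *ᵥ q) := by
    intro q
    rw [dotProduct_comm, Matrix.dotProduct_mulVec, ← Matrix.vecMul_transpose,
      Matrix.transpose_transpose, dotProduct_comm]
  rw [hAw, step, hAν, Matrix.mulVec_sub, Matrix.mulVec_mulVec, hkey, sub_self,
    dotProduct_zero]

end Feedback
section Scalar

/-- discriminant extraction: if `0 ≤ p α² + 2bα + r` for all `α` then `b² ≤ p r`. -/
lemma quad_key {p b r : ℝ} (h : ∀ α : ℝ, 0 ≤ p * (α*α) + (2*b) * α + r) :
    b^2 ≤ p * r := by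
  have := discrim_le_zero h
  simp only [discrim] at this
  nlinarith

lemma scalar1 {δ W V a P Q : ℝ} (hδ0 : 0 ≤ δ) (hδ1 : δ < 1)
    (hW : 0 ≤ W) (hV : 0 ≤ V) (hP : 0 ≤ P) (hQ : 0 ≤ Q)
    (hPQ : P + Q = 2*δ*V)
    (h1 : a^2 ≤ P*(a - (1-δ)*W)) (h2 : a^2 ≤ Q*((1+δ)*W - a))
    (ha : (1-δ)*W ≤ a) :
    (1-δ^2)*(W+V) ≤ V := by
  rcases eq_or_lt_of_le hW with hW0 | hWpos
  · nlinarith [sq_nonneg δ]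
  have hapos : 0 < a := lt_of_lt_of_le (by nlinarith) ha
  have hX : 0 < a - (1-δ)*W := by
    rcases eq_or_lt_of_le (le_sub_iff_add_le.mpr (by linarith : (1-δ)*W + 0 ≤ a)) with h | h
    · exfalso; nlinarith
    · linarith [h]
  have hY : 0 < (1+δ)*W - a := by
    by_contra hc
    push_neg at hc
    nlinarith
  have hPpos : 0 < P := by nlinarith
  have hQpos : 0 < Q := by nlinarith
  have hVpos : 0 < V := by nlinarith
  have hδpos : 0 < δ := by nlinarith
  -- from h1 h2 : P ≥ a²/(a-X), Q ≥ a²/(Y-a); summing and clearing denominators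
  have key : a^2*W ≤ V*((a - (1-δ)*W)*((1+δ)*W - a)) := by
    have e1 : a^2 * ((1+δ)*W - a) ≤ P * ((a - (1-δ)*W) * ((1+δ)*W - a)) := by
      nlinarith
    have e2 : a^2 * (a - (1-δ)*W) ≤ Q * ((a - (1-δ)*W) * ((1+δ)*W - a)) := by
      nlinarith
    have hPQR : (P+Q)*((a - (1-δ)*W)*((1+δ)*W - a))
        = 2*δ*V*((a - (1-δ)*W)*((1+δ)*W - a)) := by rw [hPQ]
    have e3 : (2*δ) * (a^2*W) ≤ (2*δ) * (V*((a - (1-δ)*W)*((1+δ)*W - a))) := by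
      nlinarith [e1, e2, hPQR]
    exact le_of_mul_le_mul_left e3 (by positivity)
  have hK : a^2*W + a^2*V - 2*V*W*a + (1-δ^2)*V*W^2 ≤ 0 := by nlinarith
  have hK2 : (a^2*W + a^2*V - 2*V*W*a + (1-δ^2)*V*W^2) * (W+V) ≤ 0 := by
    have := mul_le_mul_of_nonneg_right hK (show (0:ℝ) ≤ W+V by positivity)
    simpa using this
  nlinarith [sq_nonneg ((W+V)*a - V*W), mul_pos hVpos (mul_pos hWpos hWpos), hK2]

lemma scalar2 {δ dt m q E2 : ℝ} (hδ1 : δ < 1) (hm : 0 ≤ m) (hq : 0 ≤ q) (hE2 : 0 ≤ E2)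
    (l1 : (1-δ)*m ≤ q) (l2 : q ≤ (1+dt)*m) (l3 : q^2 ≤ q*E2) :
    Real.sqrt m ≤ Real.sqrt (1+dt) * Real.sqrt E2 / (1-δ) := by
  have h1δ : 0 < 1 - δ := by linarith
  rcases eq_or_lt_of_le hm with hm0 | hmpos
  · rw [← hm0, Real.sqrt_zero]
    positivity
  have hdt : 0 ≤ 1 + dt := by nlinarith
  have hqE : q ≤ E2 := by
    rcases eq_or_lt_of_le hq with hq0 | hqpos
    · linarith
    · nlinarith
  have hmain : (1-δ)^2 * m ≤ (1+dt) * E2 := by nlinarith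
  have hs : Real.sqrt ((1-δ)^2 * m) ≤ Real.sqrt ((1+dt) * E2) := Real.sqrt_le_sqrt hmain
  rw [Real.sqrt_mul (by positivity), Real.sqrt_sq h1δ.le] at hs
  rw [Real.sqrt_mul hdt] at hs
  rw [le_div_iff₀ h1δ]
  linarith [hs]

end Scalar

/-- feedback error bound (Lemma `lemm6` of the paper). -/
theorem stmt5 {M N : ℕ} (A : Matrix (Fin M) (Fin N) ℝ)
    (s t : ℕ) (x x' : Fin N → ℝ) (e : Fin M → ℝ) (y : Fin M → ℝ)
    (hx : Sparse s x) (hy : y = A.mulVec x + e)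
    (T : Finset (Fin N)) (hT : T.card = t)
    (hfeas : A.mulVec x' = y)
    (δst δt : ℝ) (h1 : IsRIP A (s + t) δst) (h2 : IsRIP A t δt)
    (hlt : δst < 1) :
    nrm (x - feedback A T x') ≤
      Real.sqrt (1 + δt) * nrm e / (1 - δst) +
        nrm (restr Tᶜ x) / Real.sqrt (1 - δst ^ 2) := by
  classical
  have h1δ : (0:ℝ) < 1 - δst := by linarith
  have hRHS : 0 ≤ Real.sqrt (1 + δt) * nrm e / (1 - δst) +
      nrm (restr Tᶜ x) / Real.sqrt (1 - δst ^ 2) :=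
    add_nonneg (div_nonneg (mul_nonneg (Real.sqrt_nonneg _) (nrm_nonneg e)) h1δ.le)
      (div_nonneg (nrm_nonneg _) (Real.sqrt_nonneg _))
  -- degenerate case `N = 0`
  rcases Nat.eq_zero_or_pos N with hN | hN
  · subst hN
    have : nrm (x - feedback A T x') = 0 := by simp [nrm]
    rw [this]; exact hRHS
  -- degenerate case `s + t = 0`
  rcases Nat.eq_zero_or_pos (s + t) with hst | hst
  · have hs0 : s = 0 := Nat.le_zero.mp (le_trans (Nat.le_add_right s t) hst.le)
    have ht0 : t = 0 := Nat.le_zero.mp (le_trans (Nat.le_add_left t s) hst.le)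
    have hT0 : T = ∅ := Finset.card_eq_zero.mp (by rw [hT, ht0])
    have hx0 : ∀ i, x i = 0 := by
      intro i
      by_contra hi
      have hmem : i ∈ suppF x := by simp [suppF, hi]
      have hpos : 0 < (suppF x).card := Finset.card_pos.mpr ⟨i, hmem⟩
      have hcard := hx
      unfold Sparse at hcard
      omega
    have hLHS : nrm (x - feedback A T x') = 0 := by
      have hz : x - feedback A T x' = 0 := by
        funext i
        simp [hx0 i, feedback, hT0, Pi.sub_apply]
      rw [hz]; simp [nrm]
    rw [hLHS]; exact hRHS
  -- main case
  -- δst is nonnegative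
  have hδ0 : 0 ≤ δst := by
    set i0 : Fin N := ⟨0, hN⟩
    set w : Fin N → ℝ := fun j => if j = i0 then (1:ℝ) else 0 with hw
    have hsp : Sparse (s+t) w := by
      apply sparse_of_subset (S := {i0})
      · intro i hi
        simp only [hw] at hi
        by_contra hmem
        simp [Finset.mem_singleton] at hmem
        simp [hmem] at hi
      · rw [Finset.card_singleton]; omega
    have hnsq : nsq w = 1 := by
      have h : ∀ j, (w j)^2 = if j = i0 then (1:ℝ) else 0 := by
        intro j; simp only [hw]; split <;> norm_num
      simp only [nsq, h]
      simp
    have := h1 w hsp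
    rw [hnsq] at this
    nlinarith [this.1, this.2, nsq_nonneg (A.mulVec w)]
  have hδsq : (0:ℝ) < 1 - δst^2 := by nlinarith
  -- positive definiteness and invertibility of the Gram matrix
  have htle : t ≤ s + t := Nat.le_add_left t s
  have hPD : ((colSub A T)ᵀ * colSub A T).PosDef := by
    apply G_posdef
    intro v hv
    have hsupp : Sparse (s+t) (extT T v) := by
      apply sparse_of_subset (S := T)
      · intro i hi
        by_contra hmem
        simp [extT, hmem] at hi
      · rw [hT]; exact htle
    have hlow := (h1 _ hsupp).1
    have hpos : 0 < nsq (extT T v) := by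
      obtain ⟨j, hj⟩ := Function.ne_iff.mp hv
      rw [nsq_extT]
      have : (v j) * (v j) ≤ ∑ i, v i * v i := by
        apply Finset.single_le_sum (f := fun i => v i * v i)
        · intro i _; exact mul_self_nonneg _
        · exact Finset.mem_univ j
      have hj2 : 0 < v j * v j := mul_self_pos.mpr (by simpa using hj)
      calc (0:ℝ) < v j * v j := hj2
        _ ≤ _ := this
    calc (0:ℝ) < (1 - δst) * nsq (extT T v) := by positivity
      _ ≤ nsq (A.mulVec (extT T v)) := hlow
  have hdet : IsUnit ((colSub A T)ᵀ * colSub A T).det := hPD.det_pos.ne'.isUnit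
  have hG : ((colSub A T)ᵀ * colSub A T) * ((colSub A T)ᵀ * colSub A T)⁻¹ = 1 :=
    Matrix.mul_nonsing_inv _ hdet
  have hG' : ((colSub A T)ᵀ * colSub A T)⁻¹ * ((colSub A T)ᵀ * colSub A T) = 1 :=
    Matrix.nonsing_inv_mul _ hdet
  -- split the feedback
  have hfe : A *ᵥ x' = A *ᵥ x + e := by rw [hfeas, hy]
  have hsplit := feedback_split A T hG hG' x x' e hfe
  set μ₀ := dsol A T (A *ᵥ x) with hμ₀
  set μe := dsol A T e with hμe
  set z₀ : Fin N → ℝ := x - μ₀ with hz₀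
  set u : Fin N → ℝ := restr T z₀ with hu
  set v : Fin N → ℝ := restr Tᶜ x with hv
  have hu_supp : ∀ i ∉ T, u i = 0 := by intro i hi; simp [hu, restr, hi]
  have hv_val : ∀ i, i ∉ T → v i = x i := by
    intro i hi; simp [hv, restr, Finset.mem_compl, hi]
  have hv_zero : ∀ i, i ∈ T → v i = 0 := by
    intro i hi; simp [hv, restr, Finset.mem_compl, hi]
  have hz0uv : z₀ = u + v := by
    funext i
    by_cases h : i ∈ T
    · simp [hu, restr, h, hv_zero i h, Pi.add_apply]
    · have : μ₀ i = 0 := dsol_supp A T _ i h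
      simp [hu, restr, h, hv_val i h, hz₀, Pi.sub_apply, this, Pi.add_apply]
  have huv0 : u ⬝ᵥ v = 0 := by
    apply Finset.sum_eq_zero
    intro i _
    by_cases h : i ∈ T
    · rw [hv_zero i h, mul_zero]
    · rw [hu_supp i h, zero_mul]
  set W := nsq u with hW
  set V := nsq v with hV
  set av := nsq (A *ᵥ u) with hav
  set b := (A *ᵥ u) ⬝ᵥ (A *ᵥ v) with hbv
  set cv := nsq (A *ᵥ v) with hcv
  -- orthogonality gives `av + b = 0`
  have horth := orth A T μ₀ (dsol_supp A T _) (A *ᵥ x) (G_mulVec_dsol A T hG _) u hu_supp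
  have hb : av + b = 0 := by
    have hAz : A *ᵥ x - A *ᵥ μ₀ = A *ᵥ u + A *ᵥ v := by
      rw [← Matrix.mulVec_sub, ← Matrix.mulVec_add, ← hz0uv]
    rw [hAz, dotProduct_add, dot_self_eq_nsq] at horth
    exact horth
  -- sparsity of the combined vectors
  have hsp_comb : ∀ α : ℝ, Sparse (s+t) (u + α • v) := by
    intro α
    apply sparse_of_subset (S := T ∪ suppF x)
    · intro i hi
      by_cases h : i ∈ T
      · exact Finset.mem_union_left _ h
      · apply Finset.mem_union_right
        have : (u + α • v) i = α * x i := by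
          simp [Pi.add_apply, Pi.smul_apply, hu_supp i h, hv_val i h, smul_eq_mul]
        rw [this] at hi
        have : x i ≠ 0 := fun hxi => hi (by rw [hxi, mul_zero])
        simp [suppF, this]
    · calc (T ∪ suppF x).card ≤ T.card + (suppF x).card := Finset.card_union_le _ _
        _ ≤ t + s := add_le_add (le_of_eq hT) hx
        _ = s + t := Nat.add_comm t s
  have hspv : Sparse (s+t) v := by
    apply sparse_of_subset (S := suppF x)
    · intro i hi
      by_cases h : i ∈ T
      · exact absurd (hv_zero i h) hi
      · rw [hv_val i h] at hi; simp [suppF, hi]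
    · exact le_trans hx (Nat.le_add_right s t)
  -- RIP on the family
  have hfam : ∀ α : ℝ, (1-δst)*(W + α^2*V) ≤ av + 2*α*b + α^2*cv ∧
      av + 2*α*b + α^2*cv ≤ (1+δst)*(W + α^2*V) := by
    intro α
    have hnsq1 : nsq (u + α • v) = W + α^2 * V := by
      rw [nsq_add_smul, huv0]; ring
    have hnsq2 : nsq (A *ᵥ (u + α • v)) = av + 2*α*b + α^2*cv := by
      rw [Matrix.mulVec_add, Matrix.mulVec_smul, nsq_add_smul]
    have := h1 _ (hsp_comb α)
    rw [hnsq1, hnsq2] at this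
    exact this
  have hcV1 : (1-δst)*V ≤ cv := (h1 v hspv).1
  have hcV2 : cv ≤ (1+δst)*V := (h1 v hspv).2
  have haW : (1-δst)*W ≤ av := by have := (hfam 0).1; nlinarith [this]
  have hq1 : b^2 ≤ (cv - (1-δst)*V)*(av - (1-δst)*W) := by
    apply quad_key
    intro α
    have h := (hfam α).1
    have hsq : α*α = α^2 := (sq α).symm
    rw [hsq]
    linarith only [h]
  have hq2 : b^2 ≤ ((1+δst)*V - cv)*((1+δst)*W - av) := by
    have h' : (-b)^2 ≤ ((1+δst)*V - cv)*((1+δst)*W - av) := by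
      apply quad_key
      intro α
      have h := (hfam α).2
      have hsq : α*α = α^2 := (sq α).symm
      rw [hsq]
      linarith only [h]
    rw [neg_sq] at h'
    exact h'
  have hbneg : b = -av := by linarith
  have ha1 : av^2 ≤ (cv - (1-δst)*V)*(av - (1-δst)*W) := by
    rw [hbneg, neg_sq] at hq1; exact hq1
  have ha2 : av^2 ≤ ((1+δst)*V - cv)*((1+δst)*W - av) := by
    rw [hbneg, neg_sq] at hq2; exact hq2
  have hmain1 : (1-δst^2)*(W+V) ≤ V :=
    scalar1 hδ0 hlt (nsq_nonneg u) (nsq_nonneg v)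
      (by linarith [hcV1]) (by linarith [hcV2])
      (by ring) ha1 ha2 haW
  -- bound on `nrm z₀`
  have hnsqz : nsq z₀ = W + V := by
    rw [hz0uv, nsq_add, huv0]; ring
  have hnz : nrm z₀ ≤ nrm v / Real.sqrt (1-δst^2) := by
    have hle : nsq z₀ ≤ V / (1-δst^2) := by
      rw [hnsqz, le_div_iff₀ hδsq]; linarith only [hmain1]
    calc nrm z₀ = Real.sqrt (nsq z₀) := nrm_eq z₀
      _ ≤ Real.sqrt (V / (1-δst^2)) := Real.sqrt_le_sqrt hle
      _ = Real.sqrt V / Real.sqrt (1-δst^2) := Real.sqrt_div (nsq_nonneg v) _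
      _ = nrm v / Real.sqrt (1-δst^2) := by rw [nrm_eq]
  -- bound on `nrm μe`
  have hμe_supp := dsol_supp A T e
  have hspμe_t : Sparse t μe := by
    apply sparse_of_subset (S := T)
    · intro i hi; by_contra h; exact hi (hμe_supp i h)
    · exact le_of_eq hT
  have hspμe : Sparse (s+t) μe := le_trans hspμe_t htle
  have horth2 := orth A T μe hμe_supp e (G_mulVec_dsol A T hG e) μe hμe_supp
  have hDot : (A *ᵥ μe) ⬝ᵥ e = nsq (A *ᵥ μe) := by
    rw [dotProduct_sub, dot_self_eq_nsq] at horth2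
    linarith
  have hCS : (nsq (A *ᵥ μe))^2 ≤ (nsq (A *ᵥ μe)) * nsq e := by
    have := dp_sq_le (A *ᵥ μe) e
    rw [hDot] at this
    exact this
  have hq_low := (h1 μe hspμe).1
  have hq_hi := (h2 μe hspμe_t).2
  have hm2 : nrm μe ≤ Real.sqrt (1+δt) * nrm e / (1-δst) :=
    scalar2 hlt (nsq_nonneg μe) (nsq_nonneg _) (nsq_nonneg e) hq_low hq_hi hCS
  -- combine
  have hfin : x - feedback A T x' = z₀ - μe := by
    rw [hsplit, hz₀]
    funext i
    simp [Pi.sub_apply, Pi.add_apply]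
    ring
  calc nrm (x - feedback A T x') = nrm (z₀ - μe) := by rw [hfin]
    _ ≤ nrm z₀ + nrm μe := nrm_sub_le _ _
    _ ≤ Real.sqrt (1 + δt) * nrm e / (1 - δst) + nrm (restr Tᶜ x) / Real.sqrt (1 - δst ^ 2) := by
        rw [← hv]; linarith [hnz, hm2]
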